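/- Remark 2.4: If the Pisier distance of a random process satisfies d_m(t+h, t) ≤ C_m |h|^β with β(m) ∈ (0,1], β + 1/q > α, and m ≥ max(p,q,s), then ξ(·) ∈ B^{o,p,q}_{α,s} almost surely and ( E ‖ξ‖_{B^{o,p,q}_{α,s}}^m )^{1/m} ≤ C_m · 2^{1/q} · s^{−1/s} · (β − α + 1/q)^{−1/s}. -/

import Mathlib

open MeasureTheory Set ENNReal Function


lemma rpow_iSup_nat {f : ℕ → ℝ≥0∞} {r : ℝ} (hr : 0 < r) :
    (⨆ n, f n) ^ r = ⨆ n, f n ^ r := by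
  have h := (ENNReal.orderIsoRpow r hr).map_iSup f
  simp only [ENNReal.orderIsoRpow_apply] at h
  exact h

lemma iSup_min_natCast (a : ℝ≥0∞) : ⨆ n : ℕ, min a (n : ℝ≥0∞) = a := by
  apply le_antisymm (iSup_le fun n => min_le_left _ _)
  rcases eq_or_ne a ⊤ with h | h
  · subst h
    calc (⊤:ℝ≥0∞) = ⨆ n : ℕ, (n : ℝ≥0∞) := ENNReal.iSup_natCast.symm
    _ ≤ ⨆ n : ℕ, min ⊤ (n:ℝ≥0∞) := by simp
  · obtain ⟨n, hn⟩ := ENNReal.exists_nat_gt h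
    exact le_iSup_of_le n (by simp [min_eq_left hn.le])

/-- Minkowski's integral inequality, core case: assumes finiteness of LHS. -/
lemma mink_aux {X Y : Type*} [MeasurableSpace X] [MeasurableSpace Y]
    (μ : Measure X) (ν : Measure Y) [SFinite μ] [SFinite ν] {r : ℝ} (hr : 1 < r)
    {g : X → Y → ℝ≥0∞} (hg : Measurable (uncurry g))
    (hfin : ∫⁻ x, (∫⁻ y, g x y ∂ν) ^ r ∂μ ≠ ⊤) :
    (∫⁻ x, (∫⁻ y, g x y ∂ν) ^ r ∂μ) ^ (1/r)
      ≤ ∫⁻ y, (∫⁻ x, (g x y) ^ r ∂μ) ^ (1/r) ∂ν := by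
  have hr0 : (0:ℝ) < r := lt_trans one_pos hr
  set G : X → ℝ≥0∞ := fun x => ∫⁻ y, g x y ∂ν with hGdef
  have hG : Measurable G := hg.lintegral_prod_right
  set I : ℝ≥0∞ := ∫⁻ x, G x ^ r ∂μ with hIdef
  rcases eq_or_ne I 0 with hI0 | hI0
  · rw [hI0, ENNReal.zero_rpow_of_pos (by positivity)]; exact zero_le
  set A : ℝ≥0∞ := ∫⁻ y, (∫⁻ x, (g x y) ^ r ∂μ) ^ (1/r) ∂ν with hAdef
  have hconj : r.HolderConjugate r.conjExponent := Real.HolderConjugate.conjExponent hr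
  set r' : ℝ := r.conjExponent with hr'def
  have hr'0 : 0 < r' := hconj.symm.pos
  have hGr : ∀ x, G x ^ r = G x * G x ^ (r - 1) := by
    intro x
    have h1 : r = 1 + (r - 1) := by ring
    rw [h1, ENNReal.rpow_add_of_nonneg _ _ zero_le_one (by linarith), ENNReal.rpow_one]
    ring_nf
  have hmeas2 : Measurable (uncurry fun x y => g x y * G x ^ (r - 1)) :=
    hg.mul ((hG.comp measurable_fst).pow_const _)
  have hIr'ne : I ^ (1/r') ≠ 0 ∧ I ^ (1/r') ≠ ⊤ := by
    constructor
    · simp only [Ne, ENNReal.rpow_eq_zero_iff, not_or]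
      constructor
      · rintro ⟨h, -⟩; exact hI0 h
      · rintro ⟨h, -⟩; exact hfin h
    · exact (ENNReal.rpow_lt_top_of_nonneg (by positivity) hfin).ne
  have key : I ≤ A * I ^ (1/r') := by
    have step1 : I = ∫⁻ y, ∫⁻ x, g x y * G x ^ (r - 1) ∂μ ∂ν := by
      rw [hIdef, ← MeasureTheory.lintegral_lintegral_swap hmeas2.aemeasurable]
      congr 1; funext x
      rw [hGr x, ← MeasureTheory.lintegral_mul_const _ hg.of_uncurry_left]
    have step2 : ∀ y, ∫⁻ x, g x y * G x ^ (r - 1) ∂μ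
        ≤ (∫⁻ x, (g x y) ^ r ∂μ) ^ (1/r) * I ^ (1/r') := by
      intro y
      have hold := ENNReal.lintegral_mul_le_Lp_mul_Lq μ hconj
        (f := fun x => g x y) (g := fun x => G x ^ (r - 1))
        (hg.of_uncurry_right).aemeasurable (hG.pow_const _).aemeasurable
      simp only [Pi.mul_apply] at hold
      refine hold.trans (le_of_eq ?_)
      have h2 : (∫⁻ a, (fun x => G x ^ (r - 1)) a ^ r' ∂μ) = I := by
        rw [hIdef]
        exact lintegral_congr fun x => by
          rw [← ENNReal.rpow_mul, hconj.sub_one_mul_conj]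
      rw [h2]
    calc I = ∫⁻ y, ∫⁻ x, g x y * G x ^ (r - 1) ∂μ ∂ν := step1
    _ ≤ ∫⁻ y, (∫⁻ x, (g x y) ^ r ∂μ) ^ (1/r) * I ^ (1/r') ∂ν :=
        lintegral_mono step2
    _ = A * I ^ (1/r') := by
        rw [hAdef, MeasureTheory.lintegral_mul_const]
        have hm : Measurable (uncurry fun y x => g x y ^ r) :=
          ((hg.comp measurable_swap).pow_const r)
        exact hm.lintegral_prod_right.pow_const _
  have hsplit : I = I ^ (1/r) * I ^ (1/r') := by
    rw [← ENNReal.rpow_add_of_nonneg _ _ (by positivity) (by positivity)]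
    rw [show 1/r + 1/r' = 1 by rw [one_div, one_div]; exact hconj.inv_add_inv_eq_one]
    exact (ENNReal.rpow_one _).symm
  have key2 : I ^ (1/r) * I ^ (1/r') ≤ A * I ^ (1/r') :=
    le_trans (le_of_eq hsplit.symm) key
  exact (ENNReal.mul_le_mul_iff_left hIr'ne.1 hIr'ne.2).mp key2

/-- Minkowski's integral inequality for lintegrals. -/
lemma mink {X Y : Type*} [MeasurableSpace X] [MeasurableSpace Y]
    (μ : Measure X) [IsFiniteMeasure μ] (ν : Measure Y) [SigmaFinite ν]
    {r : ℝ} (hr : 1 ≤ r) {g : X → Y → ℝ≥0∞} (hg : Measurable (uncurry g)) :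
    (∫⁻ x, (∫⁻ y, g x y ∂ν) ^ r ∂μ) ^ (1/r)
      ≤ ∫⁻ y, (∫⁻ x, (g x y) ^ r ∂μ) ^ (1/r) ∂ν := by
  rcases eq_or_lt_of_le hr with h1 | h1
  · subst h1
    simp only [ENNReal.rpow_one, one_div_one]
    exact le_of_eq (MeasureTheory.lintegral_lintegral_swap hg.aemeasurable)
  have hr0 : (0:ℝ) < r := lt_trans one_pos h1
  set S : ℕ → Set Y := spanningSets ν with hSdef
  set gn : ℕ → X → Y → ℝ≥0∞ :=
    fun n x y => min (g x y) (n:ℝ≥0∞) * (S n).indicator 1 y with hgndef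
  have hgnmeas : ∀ n, Measurable (uncurry (gn n)) := by
    intro n
    exact (hg.min measurable_const).mul
      (((measurable_one.indicator (measurableSet_spanningSets ν n))).comp measurable_snd)
  have hgnle : ∀ n x y, gn n x y ≤ g x y := by
    intro n x y
    calc min (g x y) (n:ℝ≥0∞) * (S n).indicator 1 y
        ≤ g x y * 1 := mul_le_mul' (min_le_left _ _) (Set.indicator_le_self' (fun _ _ => zero_le) y)
    _ = g x y := mul_one _
  have hgnmono : ∀ x y, Monotone (fun n => gn n x y) := by
    intro x y n m hnm
    exact mul_le_mul' (min_le_min le_rfl (Nat.cast_le.mpr hnm))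
      (Set.indicator_le_indicator_of_subset (monotone_spanningSets ν hnm) (fun _ => zero_le) y)
  have hgnsup : ∀ x y, ⨆ n, gn n x y = g x y := by
    intro x y
    apply le_antisymm (iSup_le fun n => hgnle n x y)
    obtain ⟨m, hm⟩ : ∃ m, y ∈ S m := by
      have := MeasureTheory.iUnion_spanningSets ν
      exact Set.mem_iUnion.mp (this ▸ Set.mem_univ y : y ∈ ⋃ i, S i)
    calc g x y = ⨆ n : ℕ, min (g x y) (n:ℝ≥0∞) := (iSup_min_natCast _).symm
    _ ≤ ⨆ n, gn n x y := by
        refine iSup_le fun n => le_iSup_of_le (max n m) ?_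
        have hy : y ∈ S (max n m) := monotone_spanningSets ν (le_max_right n m) hm
        rw [hgndef]
        simp only [Set.indicator_of_mem hy, Pi.one_apply, mul_one]
        exact min_le_min le_rfl (Nat.cast_le.mpr (le_max_left n m))
  set Gn : ℕ → X → ℝ≥0∞ := fun n x => ∫⁻ y, gn n x y ∂ν with hGndef
  have hGnmeas : ∀ n, Measurable (Gn n) := fun n => (hgnmeas n).lintegral_prod_right
  have hGnbd : ∀ n x, Gn n x ≤ (n:ℝ≥0∞) * ν (S n) := by
    intro n x
    calc Gn n x ≤ ∫⁻ y, (n:ℝ≥0∞) * (S n).indicator 1 y ∂ν := by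
          refine lintegral_mono fun y => mul_le_mul' (min_le_right _ _) le_rfl
    _ = (n:ℝ≥0∞) * ν (S n) := by
          rw [lintegral_const_mul _ (measurable_one.indicator (measurableSet_spanningSets ν n))]
          congr 1
          rw [lintegral_indicator (measurableSet_spanningSets ν n)]; simp; rfl
  have hGnsup : ∀ x, ⨆ n, Gn n x = ∫⁻ y, g x y ∂ν := by
    intro x
    rw [← MeasureTheory.lintegral_iSup (fun n => (hgnmeas n).of_uncurry_left)
      (fun n m hnm => fun y => hgnmono x y hnm)]
    exact lintegral_congr fun y => hgnsup x y
  have hGnmono : ∀ x, Monotone fun n => Gn n x := by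
    intro x n m hnm
    exact lintegral_mono fun y => hgnmono x y hnm
  have key : ∀ n, (∫⁻ x, (Gn n x) ^ r ∂μ) ^ (1/r)
      ≤ ∫⁻ y, (∫⁻ x, (g x y) ^ r ∂μ) ^ (1/r) ∂ν := by
    intro n
    have hfin : ∫⁻ x, (∫⁻ y, gn n x y ∂ν) ^ r ∂μ ≠ ⊤ := by
      refine ne_of_lt (lt_of_le_of_lt (lintegral_mono fun x =>
        ENNReal.rpow_le_rpow (hGnbd n x) hr0.le) ?_)
      rw [lintegral_const]
      refine ENNReal.mul_lt_top ?_ (measure_lt_top μ _)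
      exact ENNReal.rpow_lt_top_of_nonneg hr0.le
        (ENNReal.mul_ne_top (ENNReal.natCast_ne_top n) (measure_spanningSets_lt_top ν n).ne)
    refine (mink_aux μ ν h1 (hgnmeas n) hfin).trans (lintegral_mono fun y => ?_)
    exact ENNReal.rpow_le_rpow (lintegral_mono fun x =>
      ENNReal.rpow_le_rpow (hgnle n x y) hr0.le) (by positivity)
  calc (∫⁻ x, (∫⁻ y, g x y ∂ν) ^ r ∂μ) ^ (1/r)
      = (∫⁻ x, ⨆ n, (Gn n x) ^ r ∂μ) ^ (1/r) := by
        congr 1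
        refine lintegral_congr fun x => ?_
        rw [← rpow_iSup_nat hr0, hGnsup x]
    _ = (⨆ n, ∫⁻ x, (Gn n x) ^ r ∂μ) ^ (1/r) := by
        congr 1
        exact MeasureTheory.lintegral_iSup (fun n => (hGnmeas n).pow_const r)
          (fun n m hnm x => ENNReal.rpow_le_rpow (hGnmono x hnm) hr0.le)
    _ = ⨆ n, (∫⁻ x, (Gn n x) ^ r ∂μ) ^ (1/r) := rpow_iSup_nat (by positivity)
    _ ≤ ∫⁻ y, (∫⁻ x, (g x y) ^ r ∂μ) ^ (1/r) ∂ν := iSup_le key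


/-- Mixed-norm building block: `L_e` norm (with real exponent `e`) of an
`ℝ≥0∞`-valued function with respect to a measure. -/
noncomputable def lpn {α : Type*} [MeasurableSpace α] (μ : MeasureTheory.Measure α)
    (e : ℝ) (g : α → ℝ≥0∞) : ℝ≥0∞ :=
  (∫⁻ a, (g a) ^ e ∂μ) ^ (1 / e)

/-- Generalized modulus of continuity `Δ_q[f,δ]_p`. -/
noncomputable def deltaQ (p q δ : ℝ) (f : ℝ → ℝ) : ℝ≥0∞ :=
  lpn (volume.restrict (Icc (-δ) δ)) q (fun h =>
    lpn (volume.restrict (Icc (0:ℝ) 1)) p (fun t => ENNReal.ofReal |f (t + h) - f t|))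

/-- Generalized Besov seminorm `‖f‖_{B^{o,p,q}_{α,s}}`. -/
noncomputable def besovSemi (p q s α : ℝ) (f : ℝ → ℝ) : ℝ≥0∞ :=
  (∫⁻ δ in Ioc (0:ℝ) 1,
      (ENNReal.ofReal (δ ^ (-α)) * deltaQ p q δ f) ^ s * ENNReal.ofReal δ⁻¹) ^ (1 / s)

/-- Minkowski's integral inequality in `lpn` form: for `0 < e ≤ m`,
the `L_m`-norm of the `L_e`-norm is at most the `L_e`-norm of the `L_m`-norm. -/
lemma lpn_mink {X Y : Type*} [MeasurableSpace X] [MeasurableSpace Y]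
    (μ : Measure X) [IsFiniteMeasure μ] (ν : Measure Y) [SigmaFinite ν]
    {e m : ℝ} (he : 0 < e) (hem : e ≤ m) {g : X → Y → ℝ≥0∞}
    (hg : Measurable (Function.uncurry g)) :
    lpn μ m (fun x => lpn ν e (fun y => g x y))
      ≤ (∫⁻ y, (lpn μ m (fun x => g x y)) ^ e ∂ν) ^ (1/e) := by
  have hm : (0:ℝ) < m := lt_of_lt_of_le he hem
  set r : ℝ := m / e with hrdef
  have hr1 : 1 ≤ r := (one_le_div he).mpr hem
  have hr0 : (0:ℝ) < r := lt_of_lt_of_le one_pos hr1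
  have hmink := mink μ ν hr1 (g := fun x y => g x y ^ e) (hg.pow_const e)
  have hLHS : lpn μ m (fun x => lpn ν e (fun y => g x y))
      = ((∫⁻ x, (∫⁻ y, g x y ^ e ∂ν) ^ r ∂μ) ^ (1/r)) ^ (1/e) := by
    rw [lpn]
    rw [← ENNReal.rpow_mul]
    have h1 : (1/r) * (1/e) = 1/m := by
      rw [hrdef]; field_simp
    rw [h1]
    congr 1
    refine lintegral_congr fun x => ?_
    rw [lpn, ← ENNReal.rpow_mul]
    congr 1
    rw [hrdef]; field_simp
  have hRHS : (∫⁻ y, (lpn μ m (fun x => g x y)) ^ e ∂ν) ^ (1/e)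
      = (∫⁻ y, (∫⁻ x, (g x y ^ e) ^ r ∂μ) ^ (1/r) ∂ν) ^ (1/e) := by
    congr 1
    refine lintegral_congr fun y => ?_
    rw [lpn, ← ENNReal.rpow_mul]
    congr 1
    · refine lintegral_congr fun x => ?_
      rw [← ENNReal.rpow_mul]
      congr 1
      rw [hrdef]; field_simp
    · rw [hrdef]; field_simp
  rw [hLHS, hRHS]
  exact ENNReal.rpow_le_rpow hmink (by positivity)


lemma lint_rpow_Ioc {e : ℝ} (he : 0 < e) :
    ∫⁻ δ in Ioc (0:ℝ) 1, ENNReal.ofReal (δ ^ (e - 1)) = ENNReal.ofReal (1/e) := by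
  have h1 : (-1:ℝ) < e - 1 := by linarith
  have hInt : IntegrableOn (fun x : ℝ => x ^ (e-1)) (Ioc (0:ℝ) 1) volume :=
    (intervalIntegrable_iff_integrableOn_Ioc_of_le zero_le_one).mp
      (intervalIntegral.intervalIntegrable_rpow' h1)
  rw [← MeasureTheory.ofReal_integral_eq_lintegral_ofReal hInt
    ((ae_restrict_iff' measurableSet_Ioc).mpr
      (Filter.Eventually.of_forall fun x hx => Real.rpow_nonneg hx.1.le _))]
  congr 1
  rw [← intervalIntegral.integral_of_le zero_le_one, integral_rpow (Or.inl h1)]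
  rw [sub_add_cancel, Real.one_rpow, Real.zero_rpow he.ne']
  simp

lemma lpn_const_mul {α : Type*} [MeasurableSpace α] (μ : Measure α) {m : ℝ} (hm : 0 < m)
    (c : ℝ≥0∞) {f : α → ℝ≥0∞} (hf : Measurable f) :
    lpn μ m (fun x => c * f x) = c * lpn μ m f := by
  unfold lpn
  have h1 : ∀ x, (c * f x) ^ m = c ^ m * f x ^ m := fun x =>
    ENNReal.mul_rpow_of_nonneg _ _ hm.le
  simp only [h1]
  rw [lintegral_const_mul _ (hf.pow_const m), ENNReal.mul_rpow_of_nonneg _ _ (by positivity),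
    ← ENNReal.rpow_mul, mul_one_div, div_self hm.ne', ENNReal.rpow_one]

lemma lpn_mono {α : Type*} [MeasurableSpace α] (μ : Measure α) {m : ℝ} (hm : 0 < m)
    {f g : α → ℝ≥0∞} (h : ∀ x, f x ≤ g x) : lpn μ m f ≤ lpn μ m g :=
  ENNReal.rpow_le_rpow (lintegral_mono fun x => ENNReal.rpow_le_rpow (h x) hm.le) (by positivity)


section Aux
variable {Ω : Type*} [MeasurableSpace Ω]

/-- Inner `L_p` norm in `t` of the increment, as a function of `(ω, h)`. -/
noncomputable def L1x (ξ : ℝ → Ω → ℝ) (p : ℝ) (ω : Ω) (h : ℝ) : ℝ≥0∞ :=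
  lpn (volume.restrict (Icc (0:ℝ) 1)) p (fun t => ENNReal.ofReal |ξ (t + h) ω - ξ t ω|)

lemma deltaQ_eq_lpn (ξ : ℝ → Ω → ℝ) (p q δ : ℝ) (ω : Ω) :
    deltaQ p q δ (fun t => ξ t ω) = lpn (volume.restrict (Icc (-δ) δ)) q (L1x ξ p ω) := rfl

lemma measurable_L1x {ξ : ℝ → Ω → ℝ} (hmeas : Measurable (uncurry ξ)) (p : ℝ) :
    Measurable (uncurry (L1x ξ p)) := by
  have hXi : Measurable fun z : (Ω × ℝ) × ℝ =>
      ENNReal.ofReal |ξ (z.2 + z.1.2) z.1.1 - ξ z.2 z.1.1| := by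
    apply ENNReal.measurable_ofReal.comp
    apply Measurable.abs
    exact (hmeas.comp ((measurable_snd.add measurable_fst.snd).prodMk measurable_fst.fst)).sub
      (hmeas.comp (measurable_snd.prodMk measurable_fst.fst))
  have h1 : Measurable fun z : Ω × ℝ =>
      ∫⁻ t, (ENNReal.ofReal |ξ (t + z.2) z.1 - ξ t z.1|) ^ p ∂(volume.restrict (Icc (0:ℝ) 1)) :=
    Measurable.lintegral_prod_right (f := fun (z : Ω × ℝ) (t : ℝ) =>
      (ENNReal.ofReal |ξ (t + z.2) z.1 - ξ t z.1|) ^ p) (hXi.pow_const p)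
  exact h1.pow_const _

lemma measurable_deltaQ {ξ : ℝ → Ω → ℝ} (hmeas : Measurable (uncurry ξ)) (p q : ℝ) :
    Measurable (uncurry fun (ω : Ω) (δ : ℝ) => deltaQ p q δ (fun t => ξ t ω)) := by
  have hL1 := measurable_L1x hmeas p
  have hrw : (uncurry fun (ω : Ω) (δ : ℝ) => deltaQ p q δ (fun t => ξ t ω)) = fun z : Ω × ℝ =>
      (∫⁻ h, (Icc (-z.2) z.2).indicator (fun h' => (L1x ξ p z.1 h') ^ q) h ∂volume) ^ (1/q) := by
    funext z
    show deltaQ p q z.2 (fun t => ξ t z.1) = _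
    rw [deltaQ_eq_lpn, lintegral_indicator measurableSet_Icc]
    rfl
  rw [hrw]
  have hset : MeasurableSet {w : (Ω × ℝ) × ℝ | w.2 ∈ Icc (-w.1.2) w.1.2} := by
    have : {w : (Ω × ℝ) × ℝ | w.2 ∈ Icc (-w.1.2) w.1.2}
        = {w : (Ω × ℝ) × ℝ | -w.1.2 ≤ w.2} ∩ {w : (Ω × ℝ) × ℝ | w.2 ≤ w.1.2} := rfl
    rw [this]
    exact (measurableSet_le measurable_fst.snd.neg measurable_snd).inter
      (measurableSet_le measurable_snd measurable_fst.snd)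
  have hjoint : Measurable fun w : (Ω × ℝ) × ℝ =>
      (Icc (-w.1.2) w.1.2).indicator (fun h' => (L1x ξ p w.1.1 h') ^ q) w.2 := by
    simp only [Set.indicator_apply]
    exact Measurable.ite hset
      ((hL1.comp (measurable_fst.fst.prodMk measurable_snd)).pow_const q) measurable_const
  exact (Measurable.lintegral_prod_right (f := fun (z : Ω × ℝ) (h : ℝ) =>
    (Icc (-z.2) z.2).indicator (fun h' => (L1x ξ p z.1 h') ^ q) h) hjoint).pow_const _

/-- The rebalanced Besov integrand, whose `s`-th power is the Besov integrand. -/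
noncomputable def gx (ξ : ℝ → Ω → ℝ) (p q s α : ℝ) (ω : Ω) (δ : ℝ) : ℝ≥0∞ :=
  ENNReal.ofReal (δ ^ (-α)) * deltaQ p q δ (fun t => ξ t ω) * (ENNReal.ofReal δ⁻¹) ^ (1/s)

lemma measurable_gx {ξ : ℝ → Ω → ℝ} (hmeas : Measurable (uncurry ξ)) (p q s α : ℝ) :
    Measurable (uncurry (gx ξ p q s α)) := by
  apply Measurable.mul
  apply Measurable.mul
  · exact ENNReal.measurable_ofReal.comp (measurable_snd.pow measurable_const)
  · exact measurable_deltaQ hmeas p q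
  · exact (ENNReal.measurable_ofReal.comp measurable_snd.inv).pow_const _

lemma besov_eq_lpn (ξ : ℝ → Ω → ℝ) (p q α : ℝ) {s : ℝ} (hs0 : 0 < s) (ω : Ω) :
    besovSemi p q s α (fun t => ξ t ω)
      = lpn (volume.restrict (Ioc (0:ℝ) 1)) s (gx ξ p q s α ω) := by
  unfold besovSemi lpn
  congr 1
  refine lintegral_congr fun δ => ?_
  rw [gx, ENNReal.mul_rpow_of_nonneg
      (ENNReal.ofReal (δ ^ (-α)) * deltaQ p q δ fun t => ξ t ω) _ hs0.le,
    ← ENNReal.rpow_mul, one_div_mul_cancel hs0.ne', ENNReal.rpow_one]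

lemma measurable_besov {ξ : ℝ → Ω → ℝ} (hmeas : Measurable (uncurry ξ)) (p q α : ℝ) {s : ℝ}
    (hs0 : 0 < s) : Measurable fun ω => besovSemi p q s α (fun t => ξ t ω) := by
  simp only [besov_eq_lpn ξ p q α hs0]
  exact (Measurable.lintegral_prod_right (f := fun (ω : Ω) (δ : ℝ) => gx ξ p q s α ω δ ^ s)
    ((measurable_gx hmeas p q s α).pow_const s)).pow_const _

end Aux

/-- Remark 2.4: if the Pisier distance satisfies
`d_m(t+h,t) ≤ C_m |h|^β` with `β ∈ (0,1]`, `β + 1/q > α` and `m ≥ max(p,q,s)`, then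
`ξ(·) ∈ B^{o,p,q}_{α,s}` almost surely and
`(E ‖ξ‖_{B^{o,p,q}_{α,s}}^m)^{1/m} ≤ C_m · 2^{1/q} · s^{−1/s} · (β − α + 1/q)^{−1/s}`. -/
theorem stmt8 {Ω : Type*} [MeasurableSpace Ω] (P : Measure Ω) [IsProbabilityMeasure P]
    (ξ : ℝ → Ω → ℝ) (hmeas : Measurable (Function.uncurry ξ))
    (hvanish : ∀ t : ℝ, t ∉ Icc (0:ℝ) 1 → ∀ ω, ξ t ω = 0)
    (p q s α m Cm β : ℝ) (hp : 1 ≤ p) (hq : 1 ≤ q) (hs : 1 ≤ s)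
    (hm : max p (max q s) ≤ m)
    (hCm : 0 < Cm) (hβ0 : 0 < β) (hβ1 : β ≤ 1) (hβα : β + 1 / q > α)
    (hd : ∀ t h : ℝ, |h| ≤ 1 →
      lpn P m (fun ω => ENNReal.ofReal |ξ (t + h) ω - ξ t ω|)
        ≤ ENNReal.ofReal (Cm * |h| ^ β)) :
    (∀ᵐ ω ∂P, besovSemi p q s α (fun t => ξ t ω) < ⊤) ∧
      lpn P m (fun ω => besovSemi p q s α (fun t => ξ t ω))
        ≤ ENNReal.ofReal (Cm * 2 ^ (1 / q) * s ^ (-(1 / s)) * (β - α + 1 / q) ^ (-(1 / s))) := by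
  have hp0 : (0:ℝ) < p := lt_of_lt_of_le one_pos hp
  have hq0 : (0:ℝ) < q := lt_of_lt_of_le one_pos hq
  have hs0 : (0:ℝ) < s := lt_of_lt_of_le one_pos hs
  have hpm : p ≤ m := le_trans (le_max_left _ _) hm
  have hqm : q ≤ m := le_trans (le_trans (le_max_left _ _) (le_max_right _ _)) hm
  have hsm : s ≤ m := le_trans (le_trans (le_max_right _ _) (le_max_right _ _)) hm
  have hm0 : (0:ℝ) < m := lt_of_lt_of_le hp0 hpm
  set γ : ℝ := β - α + 1/q with hγdef
  have hγ0 : 0 < γ := by rw [hγdef]; linarith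
  have hL1 := measurable_L1x hmeas p
  -- Step A : the `L_m(P)`-norm of the inner `L_p` norm is bounded by `Cm |h|^β`
  have stepA : ∀ h : ℝ, |h| ≤ 1 → lpn P m (fun ω => L1x ξ p ω h)
      ≤ ENNReal.ofReal (Cm * |h| ^ β) := by
    intro h hh
    have hAmeas : Measurable (Function.uncurry
        fun (ω : Ω) (t : ℝ) => ENNReal.ofReal |ξ (t + h) ω - ξ t ω|) := by
      apply ENNReal.measurable_ofReal.comp
      apply Measurable.abs
      exact (hmeas.comp ((measurable_snd.add measurable_const).prodMk measurable_fst)).sub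
        (hmeas.comp (measurable_snd.prodMk measurable_fst))
    have h1 := lpn_mink P (volume.restrict (Icc (0:ℝ) 1)) hp0 hpm hAmeas
    refine h1.trans ?_
    calc (∫⁻ t, (lpn P m fun ω => ENNReal.ofReal |ξ (t + h) ω - ξ t ω|) ^ p
          ∂(volume.restrict (Icc (0:ℝ) 1))) ^ (1/p)
        ≤ (∫⁻ _t, (ENNReal.ofReal (Cm * |h| ^ β)) ^ p
            ∂(volume.restrict (Icc (0:ℝ) 1))) ^ (1/p) := by
          refine ENNReal.rpow_le_rpow (lintegral_mono fun t => ?_) (by positivity)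
          exact ENNReal.rpow_le_rpow (hd t h hh) hp0.le
      _ = ENNReal.ofReal (Cm * |h| ^ β) := by
          rw [lintegral_const, Measure.restrict_apply_univ, Real.volume_Icc, sub_zero,
            ENNReal.ofReal_one, mul_one, ← ENNReal.rpow_mul, mul_one_div, div_self hp0.ne',
            ENNReal.rpow_one]
  -- Step B : bound on the `L_m(P)` norm of `deltaQ`
  have stepB : ∀ δ : ℝ, δ ∈ Ioc (0:ℝ) 1 →
      lpn P m (fun ω => deltaQ p q δ (fun t => ξ t ω))
        ≤ ENNReal.ofReal (Cm * 2 ^ (1/q) * δ ^ (β + 1/q)) := by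
    intro δ hδ
    obtain ⟨hδ0, hδ1⟩ := hδ
    have h1 := lpn_mink P (volume.restrict (Icc (-δ) δ)) hq0 hqm hL1
    have h2 : lpn P m (fun ω => deltaQ p q δ (fun t => ξ t ω))
        = lpn P m (fun ω => lpn (volume.restrict (Icc (-δ) δ)) q (fun h' => L1x ξ p ω h')) := rfl
    rw [h2]
    refine h1.trans ?_
    have hbound : ∀ h' ∈ Icc (-δ) δ, (lpn P m fun ω => L1x ξ p ω h') ^ q
        ≤ (ENNReal.ofReal (Cm * δ ^ β)) ^ q := by
      intro h' hh'
      have habs : |h'| ≤ δ := abs_le.mpr ⟨hh'.1, hh'.2⟩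
      refine ENNReal.rpow_le_rpow ((stepA h' (habs.trans hδ1)).trans ?_) hq0.le
      exact ENNReal.ofReal_le_ofReal (mul_le_mul_of_nonneg_left
        (Real.rpow_le_rpow (abs_nonneg _) habs hβ0.le) hCm.le)
    calc (∫⁻ h' in Icc (-δ) δ, (lpn P m fun ω => L1x ξ p ω h') ^ q ∂volume) ^ (1/q)
        ≤ (∫⁻ _h' in Icc (-δ) δ, (ENNReal.ofReal (Cm * δ ^ β)) ^ q ∂volume) ^ (1/q) :=
          ENNReal.rpow_le_rpow (setLIntegral_mono measurable_const hbound) (by positivity)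
      _ = ENNReal.ofReal (Cm * 2 ^ (1/q) * δ ^ (β + 1/q)) := by
          rw [lintegral_const, Measure.restrict_apply_univ, Real.volume_Icc]
          have hsub : δ - -δ = 2*δ := by ring
          rw [hsub, ENNReal.ofReal_rpow_of_nonneg (by positivity) hq0.le,
            ← ENNReal.ofReal_mul (by positivity),
            ENNReal.ofReal_rpow_of_nonneg (by positivity) (by positivity)]
          congr 1
          rw [Real.mul_rpow (by positivity) (by positivity),
            ← Real.rpow_mul (by positivity), mul_one_div, div_self hq0.ne', Real.rpow_one,
            Real.mul_rpow (by norm_num) hδ0.le, Real.rpow_add hδ0]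
          ring
  -- Step C : the main moment bound
  have main2 : lpn P m (fun ω => besovSemi p q s α fun t => ξ t ω)
      ≤ ENNReal.ofReal (Cm * 2 ^ (1/q) * s ^ (-(1/s)) * γ ^ (-(1/s))) := by
    simp only [besov_eq_lpn ξ p q α hs0]
    have h2 := lpn_mink P (volume.restrict (Ioc (0:ℝ) 1)) hs0 hsm (measurable_gx hmeas p q s α)
    refine h2.trans ?_
    have h3 : ∀ δ ∈ Ioc (0:ℝ) 1, (lpn P m fun ω => gx ξ p q s α ω δ) ^ s
        ≤ ENNReal.ofReal ((Cm * 2 ^ (1/q)) ^ s * δ ^ (γ*s - 1)) := by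
      intro δ hδ
      have hδ0 := hδ.1
      have hgconst : (fun ω => gx ξ p q s α ω δ)
          = fun ω => (ENNReal.ofReal (δ ^ (-α)) * (ENNReal.ofReal δ⁻¹) ^ (1/s))
              * deltaQ p q δ (fun t => ξ t ω) := by
        funext ω; rw [gx]; ring
      have hDmeasδ : Measurable fun ω => deltaQ p q δ (fun t => ξ t ω) :=
        (measurable_deltaQ hmeas p q).of_uncurry_right
      rw [hgconst, lpn_const_mul P hm0 _ hDmeasδ,
        ENNReal.mul_rpow_of_nonneg _ _ hs0.le]
      calc (ENNReal.ofReal (δ ^ (-α)) * (ENNReal.ofReal δ⁻¹) ^ (1/s)) ^ s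
            * (lpn P m fun ω => deltaQ p q δ fun t => ξ t ω) ^ s
          ≤ (ENNReal.ofReal (δ ^ (-α)) * (ENNReal.ofReal δ⁻¹) ^ (1/s)) ^ s
            * (ENNReal.ofReal (Cm * 2 ^ (1/q) * δ ^ (β + 1/q))) ^ s :=
            mul_le_mul' le_rfl (ENNReal.rpow_le_rpow (stepB δ hδ) hs0.le)
        _ = ENNReal.ofReal ((Cm * 2 ^ (1/q)) ^ s * δ ^ (γ*s - 1)) := by
            rw [ENNReal.mul_rpow_of_nonneg _ _ hs0.le, ← ENNReal.rpow_mul,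
              one_div_mul_cancel hs0.ne', ENNReal.rpow_one,
              ENNReal.ofReal_rpow_of_nonneg (Real.rpow_nonneg hδ0.le _) hs0.le,
              ENNReal.ofReal_rpow_of_nonneg (by positivity) hs0.le,
              ← ENNReal.ofReal_mul (by positivity), ← ENNReal.ofReal_mul (by positivity)]
            congr 1
            rw [show δ⁻¹ = δ ^ (-1:ℝ) from (Real.rpow_neg_one δ).symm,
              Real.mul_rpow (by positivity) (Real.rpow_nonneg hδ0.le _),
              ← Real.rpow_mul hδ0.le, ← Real.rpow_mul hδ0.le]
            rw [show (δ:ℝ) ^ (-α*s) * δ^(-1:ℝ) * ((Cm * 2^(1/q))^s * δ^((β+1/q)*s))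
                = (Cm * 2^(1/q))^s * (δ^(-α*s) * δ^(-1:ℝ) * δ^((β+1/q)*s)) from by ring,
              ← Real.rpow_add hδ0, ← Real.rpow_add hδ0, hγdef]
            congr 1
            congr 1
            ring
    calc (∫⁻ δ in Ioc (0:ℝ) 1, (lpn P m fun ω => gx ξ p q s α ω δ) ^ s ∂volume) ^ (1/s)
        ≤ (∫⁻ δ in Ioc (0:ℝ) 1,
            ENNReal.ofReal ((Cm * 2 ^ (1/q)) ^ s * δ ^ (γ*s - 1)) ∂volume) ^ (1/s) :=
          by
          have hmf : Measurable fun δ : ℝ =>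
              ENNReal.ofReal ((Cm * 2 ^ (1/q)) ^ s * δ ^ (γ*s - 1)) :=
            ENNReal.measurable_ofReal.comp (measurable_const.mul (measurable_id.pow measurable_const))
          exact ENNReal.rpow_le_rpow (setLIntegral_mono hmf h3) (by positivity)
      _ = (ENNReal.ofReal ((Cm * 2 ^ (1/q)) ^ s) * ENNReal.ofReal (1/(γ*s))) ^ (1/s) := by
          congr 1
          have hof : ∀ δ : ℝ, ENNReal.ofReal ((Cm * 2 ^ (1/q)) ^ s * δ ^ (γ*s - 1))
              = ENNReal.ofReal ((Cm * 2 ^ (1/q)) ^ s) * ENNReal.ofReal (δ ^ (γ*s - 1)) :=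
            fun δ => ENNReal.ofReal_mul (by positivity)
          simp only [hof]
          have hmf2 : Measurable fun δ : ℝ => ENNReal.ofReal (δ ^ (γ*s - 1)) :=
            ENNReal.measurable_ofReal.comp (measurable_id.pow measurable_const)
          rw [lintegral_const_mul _ hmf2]
          congr 1
          exact lint_rpow_Ioc (by positivity)
      _ = ENNReal.ofReal (Cm * 2 ^ (1/q) * s ^ (-(1/s)) * γ ^ (-(1/s))) := by
          rw [← ENNReal.ofReal_mul (by positivity),
            ENNReal.ofReal_rpow_of_nonneg (by positivity) (by positivity)]
          congr 1
          rw [Real.mul_rpow (by positivity) (by positivity),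
            ← Real.rpow_mul (by positivity), mul_one_div, div_self hs0.ne', Real.rpow_one,
            show (1:ℝ)/(γ*s) = (γ*s) ^ (-1:ℝ) by rw [Real.rpow_neg_one]; exact one_div _,
            ← Real.rpow_mul (by positivity),
            Real.mul_rpow hγ0.le hs0.le]
          ring_nf
  constructor
  · have hne : ∫⁻ ω, (besovSemi p q s α fun t => ξ t ω) ^ m ∂P ≠ ⊤ := by
      have h1 : (∫⁻ ω, (besovSemi p q s α fun t => ξ t ω) ^ m ∂P)
          = (lpn P m (fun ω => besovSemi p q s α fun t => ξ t ω)) ^ m := by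
        rw [lpn, ← ENNReal.rpow_mul, one_div_mul_cancel hm0.ne', ENNReal.rpow_one]
      rw [h1]
      exact (lt_of_le_of_lt (ENNReal.rpow_le_rpow main2 hm0.le)
        (ENNReal.rpow_lt_top_of_nonneg hm0.le ENNReal.ofReal_ne_top)).ne
    filter_upwards [ae_lt_top ((measurable_besov hmeas p q α hs0).pow_const m) hne] with ω hω
    exact (ENNReal.rpow_lt_top_iff_of_pos hm0).mp hω
  · exact main2
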